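/- Let 𝔽 be a field, σ_1, …, σ_n ∈ 𝔽 pairwise distinct, s_1, …, s_n ≥ 1 integers, k := s_1 + … + s_n, and ω(λ) := ∏_{j=1}^{n} (λ − σ_j)^{s_j}. Let π(λ) ∈ 𝔽[λ]^{k} be the stacked vector whose j-th block (of length s_j) is (ω(λ)/(λ−σ_j)^{s_j}, ω(λ)/(λ−σ_j)^{s_j−1}, …, ω(λ)/(λ−σ_j))ᵀ, where each entry ω(λ)/(λ−σ_j)^{i} denotes the polynomial (λ−σ_j)^{s_j−i}·∏_{l≠j}(λ−σ_l)^{s_l}. Define the (k−1)×k block-bidiagonal matrix pencil L(λ) whose j-th diagonal block, for j = 1,…,n−1, is the s_j×s_j matrix J_{σ_j}(λ) with λ−σ_j on the diagonal and −1 on the superdiagonal, whose last diagonal block is the (s_n−1)×s_n matrix with λ−σ_n on the diagonal and −1 on the superdiagonal, and whose block in block-position (j, j+1), for j = 1,…,n−1, is −(λ−σ_{j+1})·e_{s_j}·e_{s_{j+1}}ᵀ (where e_s denotes the last standard basis vector of 𝔽^{s_j} and the last standard basis vector of 𝔽^{s_{j+1}} respectively), all other blocks being zero. Then L(λ)·π(λ)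 = 0 identically and L(λ₀) has rank k−1 for every λ₀ ∈ 𝔽 (so L(λ) is a dual basis for the Hermite basis with nodes σ_j of orders s_j). -/

import Mathlib

open Polynomial Matrix

namespace PaperLin

section Helper

variable {R : Type*} [CommRing R] {n : ℕ} {s t : Fin n → ℕ}

/-- generic pencil entry -/
def ent (s t : Fin n → ℕ) (a : Fin n → R)
    (p : Σ j : Fin n, Fin (t j)) (q : Σ j : Fin n, Fin (s j)) : R :=
  if p.1 = q.1 ∧ (p.2 : ℕ) = (q.2 : ℕ) then a p.1
  else if p.1 = q.1 ∧ (q.2 : ℕ) = (p.2 : ℕ) + 1 then -1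
  else if (q.1 : ℕ) = (p.1 : ℕ) + 1 ∧ (p.2 : ℕ) = s p.1 - 1 ∧ (q.2 : ℕ) = s q.1 - 1 then
    -(a q.1)
  else 0

lemma sum_ent_eq₁ (a : Fin n → R) (v : (Σ j : Fin n, Fin (s j)) → R)
    (p : Σ j : Fin n, Fin (t j)) (h : (p.2 : ℕ) + 1 < s p.1) :
    ∑ q, ent s t a p q * v q
      = a p.1 * v ⟨p.1, ⟨(p.2 : ℕ), by omega⟩⟩ - v ⟨p.1, ⟨(p.2 : ℕ) + 1, h⟩⟩ := by
  classical
  set q1 : Σ j : Fin n, Fin (s j) := ⟨p.1, ⟨(p.2 : ℕ), by omega⟩⟩ with hq1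
  set q2 : Σ j : Fin n, Fin (s j) := ⟨p.1, ⟨(p.2 : ℕ) + 1, h⟩⟩ with hq2
  have hne : q1 ≠ q2 := by
    simp only [hq1, hq2, ne_eq, Sigma.mk.inj_iff, heq_eq_eq, Fin.mk.injEq, true_and]
    omega
  have hzero : ∀ q ∈ Finset.univ, q ∉ ({q1, q2} : Finset (Σ j : Fin n, Fin (s j))) →
      ent s t a p q * v q = 0 := by
    rintro ⟨j, i⟩ - hq
    simp only [Finset.mem_insert, Finset.mem_singleton, hq1, hq2] at hq
    push_neg at hq
    obtain ⟨hq1', hq2'⟩ := hq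
    have c1 : ¬ (p.1 = j ∧ (p.2 : ℕ) = (i : ℕ)) := by
      rintro ⟨rfl, h2⟩
      exact hq1' (by simp [Sigma.mk.inj_iff, Fin.ext_iff, h2.symm])
    have c2 : ¬ (p.1 = j ∧ (i : ℕ) = (p.2 : ℕ) + 1) := by
      rintro ⟨rfl, h2⟩
      exact hq2' (by simp [Sigma.mk.inj_iff, Fin.ext_iff, h2])
    have c3 : ¬ ((j : ℕ) = (p.1 : ℕ) + 1 ∧ (p.2 : ℕ) = s p.1 - 1 ∧ (i : ℕ) = s j - 1) := by
      rintro ⟨-, h2, -⟩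
      omega
    simp only [ent, c1, c2, c3, if_false, zero_mul]
  rw [← Finset.sum_subset (Finset.subset_univ {q1, q2}) hzero, Finset.sum_pair hne]
  have e1 : ent s t a p q1 = a p.1 := by
    rw [hq1]; simp [ent]
  have e2 : ent s t a p q2 = -1 := by
    have : ¬ ((p.2 : ℕ) = (p.2 : ℕ) + 1) := by omega
    rw [hq2]; simp [ent, this]
  rw [e1, e2]
  ring

lemma sum_ent_eq₂ (hs : ∀ j, 1 ≤ s j) (a : Fin n → R) (v : (Σ j : Fin n, Fin (s j)) → R)
    (p : Σ j : Fin n, Fin (t j)) (h : (p.2 : ℕ) + 1 = s p.1) (hj : (p.1 : ℕ) + 1 < n) :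
    ∑ q, ent s t a p q * v q
      = a p.1 * v ⟨p.1, ⟨(p.2 : ℕ), by omega⟩⟩
        - a ⟨(p.1 : ℕ) + 1, hj⟩ *
            v ⟨⟨(p.1 : ℕ) + 1, hj⟩, ⟨s ⟨(p.1 : ℕ) + 1, hj⟩ - 1, by
              have := hs ⟨(p.1 : ℕ) + 1, hj⟩; omega⟩⟩ := by
  classical
  set j' : Fin n := ⟨(p.1 : ℕ) + 1, hj⟩ with hj'
  set q1 : Σ j : Fin n, Fin (s j) := ⟨p.1, ⟨(p.2 : ℕ), by omega⟩⟩ with hq1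
  set q2 : Σ j : Fin n, Fin (s j) := ⟨j', ⟨s j' - 1, by have := hs j'; omega⟩⟩ with hq2
  have hne : q1 ≠ q2 := by
    simp only [hq1, hq2, ne_eq, Sigma.mk.inj_iff, not_and]
    intro h1
    exfalso
    apply absurd (congrArg Fin.val h1)
    simp [hj']
  have hzero : ∀ q ∈ Finset.univ, q ∉ ({q1, q2} : Finset (Σ j : Fin n, Fin (s j))) →
      ent s t a p q * v q = 0 := by
    rintro ⟨j, i⟩ - hq
    simp only [Finset.mem_insert, Finset.mem_singleton, hq1, hq2] at hq
    push_neg at hq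
    obtain ⟨hq1', hq2'⟩ := hq
    have c1 : ¬ (p.1 = j ∧ (p.2 : ℕ) = (i : ℕ)) := by
      rintro ⟨rfl, h2⟩
      exact hq1' (by simp [Sigma.mk.inj_iff, Fin.ext_iff, h2.symm])
    have c2 : ¬ (p.1 = j ∧ (i : ℕ) = (p.2 : ℕ) + 1) := by
      rintro ⟨rfl, h2⟩
      have := i.isLt
      omega
    have c3 : ¬ ((j : ℕ) = (p.1 : ℕ) + 1 ∧ (p.2 : ℕ) = s p.1 - 1 ∧ (i : ℕ) = s j - 1) := by
      rintro ⟨h1, -, h3⟩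
      have hjj : j = j' := by
        apply Fin.ext; simp [hj', h1]
      subst hjj
      exact hq2' (by simp [Sigma.mk.inj_iff, Fin.ext_iff, h3])
    simp only [ent, c1, c2, c3, if_false, zero_mul]
  rw [← Finset.sum_subset (Finset.subset_univ {q1, q2}) hzero, Finset.sum_pair hne]
  have e1 : ent s t a p q1 = a p.1 := by
    rw [hq1]; simp [ent]
  have e2 : ent s t a p q2 = -(a j') := by
    have hne1 : ¬ (p.1 = j') := by
      intro h1
      apply absurd (congrArg Fin.val h1)
      simp [hj']
    simp only [ent, hq2]
    rw [if_neg, if_neg, if_pos]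
    · exact ⟨by simp [hj'], by omega, rfl⟩
    · rintro ⟨h1, -⟩; exact hne1 h1
    · rintro ⟨h1, -⟩; exact hne1 h1
  rw [e1, e2]
  ring

end Helper

section Zero

variable {R : Type*} [CommRing R] {n : ℕ}

lemma mulVec_pi_zero (hn : 1 ≤ n) {s : Fin n → ℕ} (hs : ∀ j, 1 ≤ s j) (a : Fin n → R) :
    (Matrix.of (ent s (fun j => if (j : ℕ) = n - 1 then s j - 1 else s j) a)).mulVec
      (fun q => a q.1 ^ (q.2 : ℕ) * ∏ l ∈ Finset.univ.erase q.1, a l ^ (s l)) = 0 := by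
  classical
  funext p
  have hpt : (p.2 : ℕ) < (if ((p.1 : ℕ) = n - 1) then s p.1 - 1 else s p.1) := p.2.isLt
  have hps : (p.2 : ℕ) < s p.1 := by
    by_cases hc : (p.1 : ℕ) = n - 1 <;> simp [hc] at hpt <;> omega
  have key : ∀ j : Fin n, a j * (a j ^ (s j - 1) * ∏ l ∈ Finset.univ.erase j, a l ^ s l)
      = ∏ l, a l ^ s l := by
    intro j
    rw [← mul_assoc, ← pow_succ', Nat.sub_add_cancel (hs j),
      Finset.mul_prod_erase Finset.univ (fun l => a l ^ s l) (Finset.mem_univ j)]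
  show ∑ q, ent s _ a p q * _ = 0
  by_cases hcase : (p.2 : ℕ) + 1 < s p.1
  · rw [sum_ent_eq₁ a _ p hcase]
    simp only [Fin.val_mk]
    rw [pow_succ']
    ring
  · have h2 : (p.2 : ℕ) + 1 = s p.1 := by omega
    have hj : (p.1 : ℕ) + 1 < n := by
      by_cases hc : (p.1 : ℕ) = n - 1
      · simp [hc] at hpt; omega
      · have := p.1.isLt; omega
    rw [sum_ent_eq₂ hs a _ p h2 hj]
    simp only [Fin.val_mk]
    have h2' : (p.2 : ℕ) = s p.1 - 1 := by omega
    rw [h2', key p.1, key ⟨(p.1 : ℕ) + 1, hj⟩]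
    ring

end Zero

section Rank

variable {F : Type*} [Field F] {n : ℕ}

lemma rank_lemma (hn : 1 ≤ n) (σ : Fin n → F) (hσ : Function.Injective σ)
    (s : Fin n → ℕ) (hs : ∀ j, 1 ≤ s j) (x : F) :
    (Matrix.of (ent s (fun j => if (j : ℕ) = n - 1 then s j - 1 else s j)
      (fun j => x - σ j))).rank = (∑ j, s j) - 1 := by
  classical
  set t : Fin n → ℕ := fun j => if (j : ℕ) = n - 1 then s j - 1 else s j with ht
  set a : Fin n → F := fun j => x - σ j with ha
  set A := Matrix.of (ent s t a) with hA
  set πx : (Σ j : Fin n, Fin (s j)) → F :=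
    fun q => a q.1 ^ (q.2 : ℕ) * ∏ l ∈ Finset.univ.erase q.1, a l ^ (s l) with hπx
  have hApi : A.mulVec πx = 0 := mulVec_pi_zero hn hs a
  have hn0 : 0 < n := hn
  set j0 : Fin n := ⟨0, hn0⟩ with hj0
  have hs0 : ∀ j : Fin n, 0 < s j := hs
  -- index with a nonzero "everyone else" product
  obtain ⟨jW, hW⟩ : ∃ j : Fin n, ∀ l, l ≠ j → a l ≠ 0 := by
    by_cases hex : ∃ j1, x = σ j1
    · obtain ⟨j1, hx1⟩ := hex
      refine ⟨j1, fun l hl => sub_ne_zero.mpr fun h => hl ?_⟩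
      exact hσ (by rw [← h, ← hx1])
    · push_neg at hex
      exact ⟨j0, fun l _ => sub_ne_zero.mpr (hex l)⟩
  have hPW : (∏ l ∈ Finset.univ.erase jW, a l ^ s l) ≠ 0 := by
    refine Finset.prod_ne_zero_iff.mpr fun l hl => pow_ne_zero _ (hW l ?_)
    exact (Finset.mem_erase.mp hl).1
  have hπne : πx ≠ 0 := by
    intro h0
    have h1 : πx ⟨jW, ⟨0, hs0 jW⟩⟩ = 0 := by rw [h0]; rfl
    rw [hπx] at h1
    simp only [pow_zero, one_mul] at h1
    exact hPW h1
  have hker : LinearMap.ker A.mulVecLin = Submodule.span F {πx} := by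
    apply le_antisymm
    · intro v hv
      rw [LinearMap.mem_ker, Matrix.mulVecLin_apply] at hv
      have hrow : ∀ p : Σ j : Fin n, Fin (t j), ∑ q, ent s t a p q * v q = 0 := by
        intro p
        have h1 := congrFun hv p
        simpa [Matrix.mulVec, dotProduct, hA] using h1
      set V : Fin n → F := fun j => v ⟨j, ⟨0, hs0 j⟩⟩ with hV
      have E1 : ∀ (j : Fin n) (i : ℕ) (hi : i + 1 < s j),
          v ⟨j, ⟨i + 1, hi⟩⟩ = a j * v ⟨j, ⟨i, by omega⟩⟩ := by
        intro j i hi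
        have hlt : i < t j := by
          simp only [ht]; split <;> omega
        have h1 := hrow ⟨j, ⟨i, hlt⟩⟩
        rw [sum_ent_eq₁ a v ⟨j, ⟨i, hlt⟩⟩ (by simpa using hi)] at h1
        simp only [Fin.val_mk] at h1
        exact (sub_eq_zero.mp h1).symm
      have R1 : ∀ (j : Fin n) (i : ℕ) (hi : i < s j),
          v ⟨j, ⟨i, hi⟩⟩ = a j ^ i * V j := by
        intro j i
        induction i with
        | zero => intro hi; simp [hV]
        | succ m ih =>
          intro hi
          rw [E1 j m hi, ih (by omega), pow_succ']
          ring
      have E2 : ∀ (j : Fin n) (hj : (j : ℕ) + 1 < n),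
          a j ^ s j * V j
            = a ⟨(j : ℕ) + 1, hj⟩ ^ s ⟨(j : ℕ) + 1, hj⟩ * V ⟨(j : ℕ) + 1, hj⟩ := by
        intro j hj
        have hjne : (j : ℕ) ≠ n - 1 := by omega
        have htj : t j = s j := by simp only [ht]; rw [if_neg hjne]
        have hlt : s j - 1 < t j := by rw [htj]; have := hs j; omega
        have h2 : ((⟨s j - 1, hlt⟩ : Fin (t j)) : ℕ) + 1 = s j := by
          simp only [Fin.val_mk]; have := hs j; omega
        have h1 := hrow ⟨j, ⟨s j - 1, hlt⟩⟩
        rw [sum_ent_eq₂ hs a v _ h2 hj] at h1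
        simp only [Fin.val_mk] at h1
        have h3 := sub_eq_zero.mp h1
        rw [R1 j (s j - 1) (by have := hs j; omega),
          R1 ⟨(j : ℕ) + 1, hj⟩ (s ⟨(j : ℕ) + 1, hj⟩ - 1)
            (by have := hs (⟨(j : ℕ) + 1, hj⟩ : Fin n); omega)] at h3
        have e : ∀ (l : Fin n) (w : F), a l ^ s l * w = a l * (a l ^ (s l - 1) * w) := by
          intro l w
          rw [← mul_assoc, ← pow_succ', Nat.sub_add_cancel (hs l)]
        rw [e, e]
        exact h3
      have Wchain : ∀ (m : ℕ) (hm : m < n),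
          a ⟨m, hm⟩ ^ s ⟨m, hm⟩ * V ⟨m, hm⟩ = a j0 ^ s j0 * V j0 := by
        intro m
        induction m with
        | zero => intro hm; rfl
        | succ m ih =>
          intro hm
          have hm' : m < n := by omega
          have hj : ((⟨m, hm'⟩ : Fin n) : ℕ) + 1 < n := by simpa using hm
          have hE := E2 ⟨m, hm'⟩ hj
          simp only [Fin.val_mk] at hE
          rw [← hE]
          exact ih hm'
      have Wall : ∀ j : Fin n, a j ^ s j * V j = a j0 ^ s j0 * V j0 := by
        intro j
        have h1 := Wchain (j : ℕ) j.isLt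
        simpa using h1
      -- unified claim via cross-multiplication
      have hWjW : ∀ j : Fin n, a j ^ s j * V j = a jW ^ s jW * V jW := by
        intro j; rw [Wall j, ← Wall jW]
      have claim : ∀ j : Fin n,
          V j * (∏ l ∈ Finset.univ.erase jW, a l ^ s l)
            = V jW * (∏ l ∈ Finset.univ.erase j, a l ^ s l) := by
        intro j
        by_cases hj : j = jW
        · subst hj; rfl
        by_cases hajW : a jW = 0
        · have hVj : V j = 0 := by
            have h1 := hWjW j
            rw [hajW, zero_pow (by have := hs jW; omega), zero_mul] at h1
            exact (mul_eq_zero.mp h1).resolve_left (pow_ne_zero _ (hW j hj))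
          have hPj : (∏ l ∈ Finset.univ.erase j, a l ^ s l) = 0 := by
            refine Finset.prod_eq_zero (Finset.mem_erase.mpr ⟨Ne.symm hj, Finset.mem_univ jW⟩) ?_
            rw [hajW]
            exact zero_pow (by have := hs jW; omega)
          rw [hVj, hPj]
          ring
        · have hall : ∀ l : Fin n, a l ≠ 0 := by
            intro l
            by_cases hl : l = jW
            · rw [hl]; exact hajW
            · exact hW l hl
          apply mul_left_cancel₀ (pow_ne_zero (s j) (hall j))
          have h1 := hWjW j
          have h2 := Finset.mul_prod_erase Finset.univ (fun l => a l ^ s l) (Finset.mem_univ j)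
          have h3 := Finset.mul_prod_erase Finset.univ (fun l => a l ^ s l) (Finset.mem_univ jW)
          linear_combination (∏ l ∈ Finset.univ.erase jW, a l ^ s l) * h1
            - V jW * h2 + V jW * h3
      rw [Submodule.mem_span_singleton]
      refine ⟨V jW / (∏ l ∈ Finset.univ.erase jW, a l ^ s l), ?_⟩
      funext q
      obtain ⟨j, i⟩ := q
      have hvji : v ⟨j, i⟩ = a j ^ (i : ℕ) * V j := by
        have h1 := R1 j (i : ℕ) i.isLt
        simpa using h1
      simp only [Pi.smul_apply, smul_eq_mul, hπx]
      rw [hvji]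
      rw [div_mul_eq_mul_div, div_eq_iff hPW]
      linear_combination (-(a j ^ (i : ℕ))) * claim j
    · rw [Submodule.span_le, Set.singleton_subset_iff]
      exact LinearMap.mem_ker.mpr (by rw [Matrix.mulVecLin_apply]; exact hApi)
  have hcard : Fintype.card (Σ j : Fin n, Fin (s j)) = ∑ j, s j := by
    simp [Fintype.card_sigma]
  have hsum1 : 1 ≤ ∑ j, s j :=
    le_trans (hs j0) (Finset.single_le_sum (fun i _ => Nat.zero_le (s i)) (Finset.mem_univ j0))
  have hrn := LinearMap.finrank_range_add_finrank_ker A.mulVecLin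
  rw [hker, finrank_span_singleton hπne, Module.finrank_fintype_fun_eq_card, hcard] at hrn
  rw [Matrix.rank]
  exact Nat.eq_sub_of_add_eq hrn

end Rank

section Glue

variable {F : Type*} [Field F] {n : ℕ}

lemma map_ent (s t : Fin n → ℕ) (σ : Fin n → F) (x : F) :
    (Matrix.of (ent s t (fun j => Polynomial.X - Polynomial.C (σ j)))).map (Polynomial.eval x)
      = Matrix.of (ent s t (fun j => x - σ j)) := by
  ext p q
  simp only [Matrix.map_apply, Matrix.of_apply, ent]
  split_ifs <;> simp

end Glue

variable {F : Type*} [Field F]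

/-- The explicit block-bidiagonal pencil is a dual basis for the Hermite basis
with nodes `σ_j` of orders `s_j`. -/
theorem statement6 (n : ℕ) (hn : 1 ≤ n) (σ : Fin n → F)
    (hσ : Function.Injective σ) (s : Fin n → ℕ) (hs : ∀ j, 1 ≤ s j) :
    let k : ℕ := ∑ j, s j
    let π : (Σ j : Fin n, Fin (s j)) → Polynomial F := fun p =>
      (Polynomial.X - Polynomial.C (σ p.1)) ^ (p.2 : ℕ) *
        ∏ l ∈ Finset.univ.erase p.1, (Polynomial.X - Polynomial.C (σ l)) ^ (s l)
    let t : Fin n → ℕ := fun j => if (j : ℕ) = n - 1 then s j - 1 else s j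
    let L : Matrix (Σ j : Fin n, Fin (t j)) (Σ j : Fin n, Fin (s j)) (Polynomial F) :=
      Matrix.of fun p q =>
        if p.1 = q.1 ∧ (p.2 : ℕ) = (q.2 : ℕ) then
          Polynomial.X - Polynomial.C (σ p.1)
        else if p.1 = q.1 ∧ (q.2 : ℕ) = (p.2 : ℕ) + 1 then -1
        else if (q.1 : ℕ) = (p.1 : ℕ) + 1 ∧ (p.2 : ℕ) = s p.1 - 1 ∧
            (q.2 : ℕ) = s q.1 - 1 then
          -(Polynomial.X - Polynomial.C (σ q.1))
        else 0
    L.mulVec π = 0 ∧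
    ∀ x : F, (L.map (Polynomial.eval x)).rank = k - 1 := by
  intro k π t L
  refine ⟨?_, ?_⟩
  · exact mulVec_pi_zero hn hs (fun j => Polynomial.X - Polynomial.C (σ j))
  · intro x
    have hL : L.map (Polynomial.eval x) = Matrix.of (ent s t (fun j => x - σ j)) :=
      map_ent s t σ x
    rw [hL]
    exact rank_lemma hn σ hσ s hs x

end PaperLin
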